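/- For any domain Ω ⊆ ℂ and n ≥ 2, the set S_n(Ω) of n×n complex matrices whose spectrum (set of eigenvalues) is contained in Ω is an open and connected subset of the space of n×n complex matrices. -/

import Mathlib

open Matrix Polynomial Topology

namespace MatDomAux

/-- spectrum membership via determinant -/
lemma spec_iff_det {m : ℕ} (B : Matrix (Fin m) (Fin m) ℂ) (z : ℂ) :
    z ∈ spectrum ℂ B ↔ (z • (1 : Matrix (Fin m) (Fin m) ℂ) - B).det = 0 := by
  rw [spectrum.mem_iff, Algebra.algebraMap_eq_smul_one, Matrix.isUnit_iff_isUnit_det,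
    isUnit_iff_ne_zero, not_not]

lemma exists_eigenvec {m : ℕ} {B : Matrix (Fin m) (Fin m) ℂ} {z : ℂ}
    (hz : z ∈ spectrum ℂ B) : ∃ v : Fin m → ℂ, v ≠ 0 ∧ B *ᵥ v = z • v := by
  have hs := AlgEquiv.spectrum_eq (Matrix.toLinAlgEquiv' (R := ℂ) (n := Fin m)) B
  have hz' : z ∈ spectrum ℂ (Matrix.toLinAlgEquiv' B) := by rw [hs]; exact hz
  have he : Module.End.HasEigenvalue (Matrix.toLinAlgEquiv' B : Module.End ℂ (Fin m → ℂ)) z :=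
    Module.End.hasEigenvalue_iff_mem_spectrum.mpr hz'
  obtain ⟨v, hv⟩ := Module.End.HasEigenvalue.exists_hasEigenvector he
  refine ⟨v, hv.2, ?_⟩
  have := hv.apply_eq_smul
  simpa [Matrix.toLinAlgEquiv'_apply] using this

lemma det_eq_of_col {m : ℕ} (M : Matrix (Fin (m+1)) (Fin (m+1)) ℂ)
    (h : ∀ i, i ≠ 0 → M i 0 = 0) :
    M.det = M 0 0 * (M.submatrix Fin.succ Fin.succ).det := by
  rw [Matrix.det_succ_column_zero, Finset.sum_eq_single 0]
  · simp [Fin.succAbove_zero]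
  · intro i _ hi; rw [h i hi]; ring
  · intro h; exact absurd (Finset.mem_univ _) h

lemma det_eq_of_row {m : ℕ} (M : Matrix (Fin (m+1)) (Fin (m+1)) ℂ)
    (h : ∀ j, j ≠ 0 → M 0 j = 0) :
    M.det = M 0 0 * (M.submatrix Fin.succ Fin.succ).det := by
  rw [Matrix.det_succ_row_zero, Finset.sum_eq_single 0]
  · simp [Fin.succAbove_zero]
  · intro j _ hj; rw [h j hj]; ring
  · intro h; exact absurd (Finset.mem_univ _) h

lemma spec_split {m : ℕ} (M : Matrix (Fin (m+1)) (Fin (m+1)) ℂ)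
    (h : ∀ i, i ≠ 0 → M i 0 = 0) :
    spectrum ℂ M = insert (M 0 0) (spectrum ℂ (M.submatrix Fin.succ Fin.succ)) := by
  ext z
  rw [Set.mem_insert_iff, spec_iff_det, spec_iff_det]
  have h1 : ∀ i, i ≠ 0 → (z • (1 : Matrix (Fin (m+1)) (Fin (m+1)) ℂ) - M) i 0 = 0 := by
    intro i hi
    simp [Matrix.sub_apply, Matrix.smul_apply, Matrix.one_apply, hi, h i hi]
  rw [det_eq_of_col _ h1]
  have h2 : (z • (1 : Matrix (Fin (m+1)) (Fin (m+1)) ℂ) - M).submatrix Fin.succ Fin.succ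
      = z • (1 : Matrix (Fin m) (Fin m) ℂ) - M.submatrix Fin.succ Fin.succ := by
    ext i j
    by_cases hij : i = j <;>
      simp [Matrix.submatrix_apply, Matrix.sub_apply, Matrix.smul_apply, Matrix.one_apply,
        Fin.succ_inj, hij]
  have h3 : (z • (1 : Matrix (Fin (m+1)) (Fin (m+1)) ℂ) - M) 0 0 = z - M 0 0 := by
    simp [Matrix.sub_apply, Matrix.smul_apply, Matrix.one_apply]
  rw [h2, h3, mul_eq_zero, sub_eq_zero]

lemma spec_bound {m : ℕ} (B : Matrix (Fin m) (Fin m) ℂ) {z : ℂ} (hz : z ∈ spectrum ℂ B) :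
    ‖z‖ ≤ ∑ i, ∑ j, ‖B i j‖ := by
  obtain ⟨v, hv0, hv⟩ := exists_eigenvec hz
  obtain ⟨k₀, hk₀⟩ := Function.ne_iff.mp hv0
  simp only [Pi.zero_apply] at hk₀
  obtain ⟨i₀, -, hi₀⟩ := Finset.exists_max_image Finset.univ (fun i => ‖v i‖)
    ⟨k₀, Finset.mem_univ k₀⟩
  have hvi₀ : 0 < ‖v i₀‖ :=
    lt_of_lt_of_le (by simpa using hk₀) (hi₀ k₀ (Finset.mem_univ _))
  have hrow : (B *ᵥ v) i₀ = z * v i₀ := by rw [hv]; simp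
  have hstep : ‖z‖ * ‖v i₀‖ ≤ (∑ j, ‖B i₀ j‖) * ‖v i₀‖ := by
    calc ‖z‖ * ‖v i₀‖ = ‖(B *ᵥ v) i₀‖ := by
          rw [hrow, norm_mul]
      _ ≤ ∑ j, ‖B i₀ j * v j‖ := by
          rw [hrow] at *
          rw [show z * v i₀ = ∑ j, B i₀ j * v j from (congrFun hv i₀ ▸ rfl : (B *ᵥ v) i₀ = z * v i₀) ▸ rfl]
          exact norm_sum_le _ _
      _ ≤ ∑ j, ‖B i₀ j‖ * ‖v i₀‖ := by
          refine Finset.sum_le_sum fun j _ => ?_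
          rw [norm_mul]
          exact mul_le_mul_of_nonneg_left (hi₀ j (Finset.mem_univ _)) (by positivity)
      _ = (∑ j, ‖B i₀ j‖) * ‖v i₀‖ := by rw [Finset.sum_mul]
  have h1 : ‖z‖ ≤ ∑ j, ‖B i₀ j‖ :=
    le_of_mul_le_mul_right hstep hvi₀
  refine h1.trans ?_
  exact Finset.single_le_sum (f := fun i => ∑ j, ‖B i j‖)
    (fun i _ => Finset.sum_nonneg fun j _ => by positivity) (Finset.mem_univ i₀)


/-- embed a scalar and an `m×m` matrix as a block matrix of size `m+1`. -/
def Phi {m : ℕ} (c : ℂ) (B : Matrix (Fin m) (Fin m) ℂ) :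
    Matrix (Fin (m+1)) (Fin (m+1)) ℂ :=
  Matrix.of (Fin.cons (Fin.cons c 0) (fun i' => Fin.cons 0 (B i')))

@[simp] lemma Phi_zero_zero {m : ℕ} (c : ℂ) (B : Matrix (Fin m) (Fin m) ℂ) :
    Phi c B 0 0 = c := rfl

@[simp] lemma Phi_zero_succ {m : ℕ} (c : ℂ) (B : Matrix (Fin m) (Fin m) ℂ) (j : Fin m) :
    Phi c B 0 j.succ = 0 := by
  show (Fin.cons (Fin.cons c 0) (fun i' => Fin.cons 0 (B i')) : _ → _ → ℂ) 0 j.succ = 0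
  rw [Fin.cons_zero, Fin.cons_succ]
  rfl

@[simp] lemma Phi_succ_zero {m : ℕ} (c : ℂ) (B : Matrix (Fin m) (Fin m) ℂ) (i : Fin m) :
    Phi c B i.succ 0 = 0 := by
  show (Fin.cons (Fin.cons c 0) (fun i' => Fin.cons 0 (B i')) : _ → _ → ℂ) i.succ 0 = 0
  rw [Fin.cons_succ, Fin.cons_zero]

@[simp] lemma Phi_succ_succ {m : ℕ} (c : ℂ) (B : Matrix (Fin m) (Fin m) ℂ) (i j : Fin m) :
    Phi c B i.succ j.succ = B i j := by
  show (Fin.cons (Fin.cons c 0) (fun i' => Fin.cons 0 (B i')) : _ → _ → ℂ) i.succ j.succ = B i j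
  rw [Fin.cons_succ, Fin.cons_succ]

lemma Phi_col {m : ℕ} (c : ℂ) (B : Matrix (Fin m) (Fin m) ℂ) :
    ∀ i, i ≠ 0 → Phi c B i 0 = 0 := by
  intro i hi
  obtain ⟨i', rfl⟩ := Fin.eq_succ_of_ne_zero hi
  simp

lemma Phi_submatrix {m : ℕ} (c : ℂ) (B : Matrix (Fin m) (Fin m) ℂ) :
    (Phi c B).submatrix Fin.succ Fin.succ = B := by
  ext i j; simp [Matrix.submatrix_apply]

lemma Phi_spectrum {m : ℕ} (c : ℂ) (B : Matrix (Fin m) (Fin m) ℂ) :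
    spectrum ℂ (Phi c B) = insert c (spectrum ℂ B) := by
  rw [spec_split _ (Phi_col c B), Phi_submatrix, Phi_zero_zero]

lemma Phi_smul_one {m : ℕ} (z : ℂ) :
    Phi z (z • (1 : Matrix (Fin m) (Fin m) ℂ)) = z • (1 : Matrix (Fin (m+1)) (Fin (m+1)) ℂ) := by
  ext i j
  induction i using Fin.cases with
  | zero =>
    induction j using Fin.cases with
    | zero => simp [Matrix.smul_apply, Matrix.one_apply]
    | succ j => simp [Matrix.smul_apply, Matrix.one_apply, (Fin.succ_ne_zero j).symm]
  | succ i =>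
    induction j using Fin.cases with
    | zero => simp [Matrix.smul_apply, Matrix.one_apply, Fin.succ_ne_zero i]
    | succ j => simp [Matrix.smul_apply, Matrix.one_apply, Fin.succ_inj]

/-- conjugation by an invertible matrix, along a path in `GL`. -/
lemma joinedIn_conj {m : ℕ} (Ω : Set ℂ) (B P : Matrix (Fin m) (Fin m) ℂ)
    (hP : IsUnit P.det) (hB : spectrum ℂ B ⊆ Ω) :
    JoinedIn {A : Matrix (Fin m) (Fin m) ℂ | spectrum ℂ A ⊆ Ω} B (P⁻¹ * B * P) := by
  set Q : ℂ → Matrix (Fin m) (Fin m) ℂ := fun z => 1 + z • (P - 1) with hQ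
  have hQ0 : Q 0 = 1 := by simp [hQ]
  have hQ1 : Q 1 = P := by simp [hQ]
  set q : Polynomial ℂ :=
    (Matrix.of fun i j => Polynomial.C ((1 : Matrix (Fin m) (Fin m) ℂ) i j)
      + Polynomial.X * Polynomial.C ((P - 1) i j)).det with hq
  have hev : ∀ z, Polynomial.eval z q = (Q z).det := by
    intro z
    rw [hq, show (Polynomial.eval z) = ⇑(Polynomial.evalRingHom z) from rfl,
      RingHom.map_det]
    congr 1
    ext i j
    simp only [RingHom.mapMatrix_apply, Matrix.map_apply, Matrix.of_apply, Polynomial.coe_evalRingHom, Polynomial.eval_add, Polynomial.eval_mul,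
      Polynomial.eval_C, Polynomial.eval_X, hQ, Matrix.add_apply, Matrix.smul_apply,
      Matrix.sub_apply, smul_eq_mul]
  have hq0 : q ≠ 0 := by
    intro h0
    have h1 := hev 1
    rw [h0, hQ1] at h1
    simp only [Polynomial.eval_zero] at h1
    exact hP.ne_zero h1.symm
  set F : Set ℂ := {z : ℂ | q.IsRoot z} with hF
  have hFc : F.Countable := (Polynomial.finite_setOf_isRoot hq0).countable
  have hpc : IsPathConnected Fᶜ :=
    Set.Countable.isPathConnected_compl_of_one_lt_rank
      (by rw [Complex.rank_real_complex]; norm_num) hFc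
  have h0F : (0 : ℂ) ∈ Fᶜ := by
    simp only [hF, Set.mem_compl_iff, Set.mem_setOf_eq, Polynomial.IsRoot]
    rw [hev 0, hQ0, Matrix.det_one]
    exact one_ne_zero
  have h1F : (1 : ℂ) ∈ Fᶜ := by
    simp only [hF, Set.mem_compl_iff, Set.mem_setOf_eq, Polynomial.IsRoot]
    rw [hev 1, hQ1]
    exact hP.ne_zero
  obtain ⟨γ, hγ⟩ := hpc.joinedIn 0 h0F 1 h1F
  have hdet : ∀ t, (Q (γ t)).det ≠ 0 := by
    intro t
    have := hγ t
    simp only [hF, Set.mem_compl_iff, Set.mem_setOf_eq, Polynomial.IsRoot] at this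
    rwa [hev (γ t)] at this
  have hQcont : Continuous fun t : unitInterval => Q (γ t) :=
    continuous_const.add ((γ.continuous).smul continuous_const)
  have hcont : Continuous fun t : unitInterval => (Q (γ t))⁻¹ * B * Q (γ t) := by
    have h1 : (fun t : unitInterval => (Q (γ t))⁻¹)
        = fun t => ((Q (γ t)).det)⁻¹ • (Q (γ t)).adjugate := by
      funext t; rw [Matrix.inv_def, Ring.inverse_eq_inv]
    have h2 : Continuous fun t : unitInterval => (Q (γ t))⁻¹ := by
      rw [h1]
      exact ((hQcont.matrix_det).inv₀ hdet).smul hQcont.matrix_adjugate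
    exact (h2.matrix_mul continuous_const).matrix_mul hQcont
  refine ⟨⟨⟨fun t => (Q (γ t))⁻¹ * B * Q (γ t), hcont⟩, ?_, ?_⟩, ?_⟩
  · show (Q (γ 0))⁻¹ * B * Q (γ 0) = B
    rw [γ.source, hQ0]
    have : (1 : Matrix (Fin m) (Fin m) ℂ)⁻¹ = 1 := by
      rw [Matrix.inv_def, Matrix.det_one, Matrix.adjugate_one, Ring.inverse_one, one_smul]
    rw [this, one_mul, mul_one]
  · show (Q (γ 1))⁻¹ * B * Q (γ 1) = P⁻¹ * B * P
    rw [γ.target, hQ1]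
  · intro t
    show spectrum ℂ ((Q (γ t))⁻¹ * B * Q (γ t)) ⊆ Ω
    have hu : IsUnit (Q (γ t)) :=
      (Matrix.isUnit_iff_isUnit_det _).mpr (isUnit_iff_ne_zero.mpr (hdet t))
    have heq : (Q (γ t))⁻¹ * B * Q (γ t)
        = ((hu.unit⁻¹ : (Matrix (Fin m) (Fin m) ℂ)ˣ) : Matrix (Fin m) (Fin m) ℂ) * B
          * (hu.unit : Matrix (Fin m) (Fin m) ℂ) := by
      rw [Matrix.coe_units_inv, IsUnit.unit_spec]
    rw [heq, spectrum.units_conjugate']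
    exact hB

lemma joined_aux (Ω : Set ℂ) (hΩo : IsOpen Ω) (hΩc : IsConnected Ω) {z₀ : ℂ} (hz₀ : z₀ ∈ Ω) :
    ∀ (m : ℕ) (A : Matrix (Fin m) (Fin m) ℂ), spectrum ℂ A ⊆ Ω →
      JoinedIn {B : Matrix (Fin m) (Fin m) ℂ | spectrum ℂ B ⊆ Ω} A
        (z₀ • (1 : Matrix (Fin m) (Fin m) ℂ)) := by
  have hpcΩ : IsPathConnected Ω := hΩo.isConnected_iff_isPathConnected.mp hΩc
  intro m
  induction m with
  | zero =>
    intro A hA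
    have hA0 : A = z₀ • (1 : Matrix (Fin 0) (Fin 0) ℂ) := by
      ext i j; exact i.elim0
    rw [hA0] at hA ⊢
    exact JoinedIn.refl hA
  | succ n IH =>
    intro A hA
    -- eigenvalue and eigenvector
    obtain ⟨μ, hμ⟩ := Module.End.exists_eigenvalue
      (Matrix.toLinAlgEquiv' A : Module.End ℂ (Fin (n+1) → ℂ))
    obtain ⟨v, hv⟩ := Module.End.HasEigenvalue.exists_hasEigenvector hμ
    have hvA : A *ᵥ v = μ • v := by
      have := hv.apply_eq_smul
      simpa [Matrix.toLinAlgEquiv'_apply] using this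
    obtain ⟨k, hk⟩ := Function.ne_iff.mp hv.2
    simp only [Pi.zero_apply] at hk
    -- build an invertible matrix with 0-th column v
    set s : Equiv.Perm (Fin (n+1)) := Equiv.swap 0 k with hs
    set v' : Fin (n+1) → ℂ := fun i => v (s i) with hv'
    set Q1 : Matrix (Fin (n+1)) (Fin (n+1)) ℂ :=
      (1 : Matrix (Fin (n+1)) (Fin (n+1)) ℂ).submatrix s id with hQ1
    set Q2 : Matrix (Fin (n+1)) (Fin (n+1)) ℂ :=
      (1 : Matrix (Fin (n+1)) (Fin (n+1)) ℂ).updateCol 0 v' with hQ2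
    have hQ1mulVec : ∀ w : Fin (n+1) → ℂ, Q1 *ᵥ w = fun i => w (s i) := by
      intro w
      funext i
      simp [hQ1, Matrix.mulVec, dotProduct, Matrix.submatrix_apply, Matrix.one_apply]
    have hQ1Q1 : Q1 * Q1 = 1 := by
      ext i l
      rw [Matrix.mul_apply, Finset.sum_eq_single (s i)]
      · simp [hQ1, hs, Matrix.submatrix_apply, Matrix.one_apply, Equiv.swap_apply_self]
      · intro x _ hx
        simp only [hQ1, Matrix.submatrix_apply, id_eq, Matrix.one_apply]
        rw [if_neg (fun h => hx h.symm), zero_mul]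
      · intro h; exact absurd (Finset.mem_univ _) h
    have hQ1u : IsUnit Q1 := by
      rw [Matrix.isUnit_iff_isUnit_det]
      have hd : Q1.det * Q1.det = 1 := by rw [← Matrix.det_mul, hQ1Q1, Matrix.det_one]
      exact IsUnit.of_mul_eq_one _ hd
    have hQ2row : ∀ j, j ≠ 0 → Q2 0 j = 0 := by
      intro j hj
      simp [hQ2, Matrix.updateCol_apply, hj, Matrix.one_apply, Ne.symm hj]
    have hQ2sub : Q2.submatrix Fin.succ Fin.succ = (1 : Matrix (Fin n) (Fin n) ℂ) := by
      ext i j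
      by_cases hij : i = j <;>
        simp [hQ2, Matrix.submatrix_apply, Matrix.updateCol_apply, Fin.succ_ne_zero,
          Matrix.one_apply, Fin.succ_inj, hij]
    have hQ2det : Q2.det = v k := by
      rw [det_eq_of_row _ hQ2row, hQ2sub, Matrix.det_one, mul_one]
      simp [hQ2, Matrix.updateCol_apply, hv', hs, Equiv.swap_apply_left]
    have hQ2u : IsUnit Q2 := by
      rw [Matrix.isUnit_iff_isUnit_det, hQ2det, isUnit_iff_ne_zero]
      exact hk
    set P : Matrix (Fin (n+1)) (Fin (n+1)) ℂ := Q1 * Q2 with hP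
    have hPu : IsUnit P := hQ1u.mul hQ2u
    have hPdet : IsUnit P.det := (Matrix.isUnit_iff_isUnit_det P).mp hPu
    have hPe0 : P *ᵥ Pi.single 0 1 = v := by
      rw [hP, ← Matrix.mulVec_mulVec, Matrix.mulVec_single]
      have h2 : (fun i => Q2 i 0 * 1) = v' := by
        funext i; simp [hQ2, Matrix.updateCol_apply]
      rw [show MulOpposite.op (1:ℂ) • Q2.col 0 = fun i => Q2 i 0 * 1 from rfl, h2, hQ1mulVec]
      funext i
      simp [hv', hs, Equiv.swap_apply_self]
    set M : Matrix (Fin (n+1)) (Fin (n+1)) ℂ := P⁻¹ * A * P with hM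
    have hMe0 : M *ᵥ (Pi.single 0 1 : Fin (n+1) → ℂ) = μ • (Pi.single 0 1 : Fin (n+1) → ℂ) := by
      rw [hM, ← Matrix.mulVec_mulVec, ← Matrix.mulVec_mulVec, hPe0, hvA,
        Matrix.mulVec_smul, ← hPe0, Matrix.mulVec_mulVec, Matrix.nonsing_inv_mul _ hPdet,
        Matrix.one_mulVec]
    have hMi0 : ∀ i, M i 0 = if i = 0 then μ else 0 := by
      intro i
      have := congrFun hMe0 i
      simp only [Matrix.mulVec_single_one, Matrix.col_apply, mul_one, Pi.smul_apply, Pi.single_apply,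
        smul_eq_mul] at this
      rw [this]
      by_cases hi : i = 0 <;> simp [hi]
    have hMcol : ∀ i, i ≠ 0 → M i 0 = 0 := by
      intro i hi; rw [hMi0 i, if_neg hi]
    have hM00 : M 0 0 = μ := by rw [hMi0 0, if_pos rfl]
    set A' : Matrix (Fin n) (Fin n) ℂ := M.submatrix Fin.succ Fin.succ with hA'
    -- spectrum of M
    have hMspec : spectrum ℂ M = spectrum ℂ A := by
      have heq : M = ((hPu.unit⁻¹ : (Matrix (Fin (n+1)) (Fin (n+1)) ℂ)ˣ)
            : Matrix (Fin (n+1)) (Fin (n+1)) ℂ) * A * (hPu.unit : Matrix (Fin (n+1)) (Fin (n+1)) ℂ) := by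
        rw [hM, Matrix.coe_units_inv, IsUnit.unit_spec]
      rw [heq, spectrum.units_conjugate']
    have hMΩ : spectrum ℂ M ⊆ Ω := by rw [hMspec]; exact hA
    have hsplit : spectrum ℂ M = insert μ (spectrum ℂ A') := by
      rw [spec_split M hMcol, hM00, hA']
    have hμΩ : μ ∈ Ω := hMΩ (by rw [hsplit]; exact Set.mem_insert _ _)
    have hA'Ω : spectrum ℂ A' ⊆ Ω := fun z hz => hMΩ (by rw [hsplit]; exact Set.mem_insert_of_mem _ hz)
    -- first path : A to M
    have J1 : JoinedIn {B : Matrix (Fin (n+1)) (Fin (n+1)) ℂ | spectrum ℂ B ⊆ Ω} A M :=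
      joinedIn_conj Ω A P hPdet hA
    -- second path : M to Phi μ A'
    set Nf : ℝ → Matrix (Fin (n+1)) (Fin (n+1)) ℂ :=
      fun t => Matrix.of fun i j => if i = 0 ∧ j ≠ 0 then (t : ℂ) * M i j else M i j with hNf
    have hNfcol : ∀ t, ∀ i, i ≠ 0 → Nf t i 0 = 0 := by
      intro t i hi
      simp only [hNf, Matrix.of_apply, hi, ne_eq, not_true_eq_false, and_false, false_and,
        if_false, if_neg (by simp [hi] : ¬(i = 0 ∧ (0 : Fin (n+1)) ≠ 0))]
      exact hMcol i hi
    have hNf00 : ∀ t, Nf t 0 0 = μ := by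
      intro t
      simp only [hNf, Matrix.of_apply]
      rw [if_neg (by simp), hM00]
    have hNfsub : ∀ t, (Nf t).submatrix Fin.succ Fin.succ = A' := by
      intro t
      ext i j
      simp only [hNf, Matrix.submatrix_apply, Matrix.of_apply, hA']
      rw [if_neg (by simp [Fin.succ_ne_zero])]
    have hNfspec : ∀ t : ℝ, spectrum ℂ (Nf t) ⊆ Ω := by
      intro t
      rw [spec_split (Nf t) (hNfcol t), hNf00 t, hNfsub t]
      exact Set.insert_subset hμΩ hA'Ω
    have hNf1 : Nf 1 = M := by
      ext i j
      simp only [hNf, Matrix.of_apply, Complex.ofReal_one]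
      split_ifs <;> simp
    have hNf0 : Nf 0 = Phi μ A' := by
      ext i j
      induction i using Fin.cases with
      | zero =>
        induction j using Fin.cases with
        | zero => simp [hNf, hM00]
        | succ j => simp [hNf, Fin.succ_ne_zero]
      | succ i =>
        induction j using Fin.cases with
        | zero => simp [hNf, Fin.succ_ne_zero, hMcol _ (Fin.succ_ne_zero i)]
        | succ j => simp [hNf, Fin.succ_ne_zero, hA', Matrix.submatrix_apply]
    have hNfcont : Continuous fun t : unitInterval => Nf (t : ℝ) := by
      apply continuous_matrix
      intro i j
      simp only [hNf, Matrix.of_apply]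
      by_cases hij : i = 0 ∧ j ≠ 0
      · have heq : (fun t : unitInterval => if i = 0 ∧ j ≠ 0 then ((t : ℝ) : ℂ) * M i j else M i j)
            = fun t : unitInterval => ((t : ℝ) : ℂ) * M i j := by
          funext t; rw [if_pos hij]
        rw [heq]
        exact (Complex.continuous_ofReal.comp continuous_subtype_val).mul continuous_const
      · have heq : (fun t : unitInterval => if i = 0 ∧ j ≠ 0 then ((t : ℝ) : ℂ) * M i j else M i j)
            = fun _ : unitInterval => M i j := by
          funext t; rw [if_neg hij]
        rw [heq]
        exact continuous_const
    have J2 : JoinedIn {B : Matrix (Fin (n+1)) (Fin (n+1)) ℂ | spectrum ℂ B ⊆ Ω} M (Phi μ A') := by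
      refine JoinedIn.symm ⟨⟨⟨fun t => Nf (t : ℝ), hNfcont⟩, ?_, ?_⟩, ?_⟩
      · show Nf ((0 : unitInterval) : ℝ) = Phi μ A'
        rw [Set.Icc.coe_zero, hNf0]
      · show Nf ((1 : unitInterval) : ℝ) = M
        rw [Set.Icc.coe_one, hNf1]
      · intro t
        exact hNfspec (t : ℝ)
    -- third path : Phi μ A' to z₀ • 1
    obtain ⟨γ₁, hγ₁⟩ := hpcΩ.joinedIn μ hμΩ z₀ hz₀
    obtain ⟨γ₂, hγ₂⟩ := IH A' hA'Ω
    have hcont3 : Continuous fun t : unitInterval => Phi (γ₁ t) (γ₂ t) := by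
      apply continuous_matrix
      intro i j
      induction i using Fin.cases with
      | zero =>
        induction j using Fin.cases with
        | zero => simpa using γ₁.continuous
        | succ j => simpa using continuous_const
      | succ i =>
        induction j using Fin.cases with
        | zero => simpa using continuous_const
        | succ j =>
          simp only [Phi_succ_succ]
          exact (continuous_apply j).comp ((continuous_apply i).comp γ₂.continuous)
    have J3 : JoinedIn {B : Matrix (Fin (n+1)) (Fin (n+1)) ℂ | spectrum ℂ B ⊆ Ω}
        (Phi μ A') (z₀ • (1 : Matrix (Fin (n+1)) (Fin (n+1)) ℂ)) := by
      refine ⟨⟨⟨fun t => Phi (γ₁ t) (γ₂ t), hcont3⟩, ?_, ?_⟩, ?_⟩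
      · show Phi (γ₁ 0) (γ₂ 0) = Phi μ A'
        rw [γ₁.source, γ₂.source]
      · show Phi (γ₁ 1) (γ₂ 1) = z₀ • 1
        rw [γ₁.target, γ₂.target, Phi_smul_one]
      · intro t
        show spectrum ℂ (Phi (γ₁ t) (γ₂ t)) ⊆ Ω
        rw [Phi_spectrum]
        exact Set.insert_subset (hγ₁ t) (hγ₂ t)
    exact (J1.trans J2).trans J3

end MatDomAux

/-- For any domain `Ω ⊆ ℂ` and `n ≥ 2`, the set
`S_n(Ω) = {A ∈ M_n(ℂ) : σ(A) ⊆ Ω}` is open and connected in `M_n(ℂ)`. -/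
theorem matricial_domain_isOpen_isConnected
    (Ω : Set ℂ) (hΩo : IsOpen Ω) (hΩc : IsConnected Ω)
    (n : ℕ) (hn : 2 ≤ n) :
    IsOpen {A : Matrix (Fin n) (Fin n) ℂ | spectrum ℂ A ⊆ Ω} ∧
      IsConnected {A : Matrix (Fin n) (Fin n) ℂ | spectrum ℂ A ⊆ Ω} := by
  constructor
  · -- openness
    rw [isOpen_iff_mem_nhds]
    intro A hA
    simp only [Set.mem_setOf_eq] at hA
    set R : ℝ := (∑ i, ∑ j, ‖A i j‖) + 1 with hR
    have hcsum : Continuous fun B : Matrix (Fin n) (Fin n) ℂ =>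
        ∑ i, ∑ j, ‖B i j‖ := by
      refine continuous_finset_sum _ fun i _ => continuous_finset_sum _ fun j _ => ?_
      exact continuous_norm.comp ((continuous_apply j).comp (continuous_apply i))
    have hU1 : {B : Matrix (Fin n) (Fin n) ℂ | (∑ i, ∑ j, ‖B i j‖) < R} ∈
        𝓝 A := by
      refine (isOpen_lt hcsum continuous_const).mem_nhds ?_
      simp only [Set.mem_setOf_eq, hR]
      linarith
    set K : Set ℂ := Metric.closedBall (0 : ℂ) R \ Ω with hK
    have hKcpt : IsCompact K := (isCompact_closedBall _ _).diff hΩo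
    have hev : ∀ z ∈ K, ∀ᶠ p : (Matrix (Fin n) (Fin n) ℂ) × ℂ in 𝓝 (A, z),
        (p.2 • (1 : Matrix (Fin n) (Fin n) ℂ) - p.1).det ≠ 0 := by
      intro z hz
      have hzA : (z • (1 : Matrix (Fin n) (Fin n) ℂ) - A).det ≠ 0 := by
        intro h0
        exact hz.2 (hA ((MatDomAux.spec_iff_det A z).mpr h0))
      have hc : Continuous fun p : (Matrix (Fin n) (Fin n) ℂ) × ℂ =>
          (p.2 • (1 : Matrix (Fin n) (Fin n) ℂ) - p.1).det :=
        ((continuous_snd.smul continuous_const).sub continuous_fst).matrix_det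
      have hopen : IsOpen {p : (Matrix (Fin n) (Fin n) ℂ) × ℂ |
          (p.2 • (1 : Matrix (Fin n) (Fin n) ℂ) - p.1).det ≠ 0} :=
        isOpen_ne.preimage hc
      have hmem' : (A, z) ∈ {p : (Matrix (Fin n) (Fin n) ℂ) × ℂ |
          (p.2 • (1 : Matrix (Fin n) (Fin n) ℂ) - p.1).det ≠ 0} := hzA
      exact Filter.eventually_of_mem (hopen.mem_nhds hmem') fun p hp => hp
    have hglob : ∀ᶠ B in 𝓝 A, ∀ z ∈ K, (z • (1 : Matrix (Fin n) (Fin n) ℂ) - B).det ≠ 0 :=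
      hKcpt.eventually_forall_of_forall_eventually
        (P := fun B z => (z • (1 : Matrix (Fin n) (Fin n) ℂ) - B).det ≠ 0) hev
    filter_upwards [hglob, hU1] with B h1 h2
    intro z hzB
    by_contra hzΩ
    have hb : ‖z‖ ≤ ∑ i, ∑ j, ‖B i j‖ := MatDomAux.spec_bound B hzB
    have hzK : z ∈ K := by
      refine ⟨Metric.mem_closedBall.mpr ?_, hzΩ⟩
      rw [Complex.dist_eq, sub_zero]
      exact le_of_lt (lt_of_le_of_lt hb h2)
    exact h1 z hzK ((MatDomAux.spec_iff_det B z).mp hzB)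
  · -- connectedness
    obtain ⟨z₀, hz₀⟩ := hΩc.nonempty
    have hmem : (z₀ • (1 : Matrix (Fin n) (Fin n) ℂ)) ∈
        {B : Matrix (Fin n) (Fin n) ℂ | spectrum ℂ B ⊆ Ω} := by
      have hd : (z₀ • (1 : Matrix (Fin n) (Fin n) ℂ))
          = Matrix.diagonal (fun _ => z₀) := by
        ext i j
        by_cases hij : i = j <;>
          simp [Matrix.smul_apply, Matrix.one_apply, Matrix.diagonal_apply, hij]
      rw [Set.mem_setOf_eq, hd, spectrum_diagonal]
      rintro z ⟨i, rfl⟩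
      exact hz₀
    have hpc : IsPathConnected {B : Matrix (Fin n) (Fin n) ℂ | spectrum ℂ B ⊆ Ω} :=
      ⟨_, hmem, fun {B} hB => (MatDomAux.joined_aux Ω hΩo hΩc hz₀ n B hB).symm⟩
    exact hpc.isConnected
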